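/- Suppose A belongs to the class 𝒜 and Φ satisfies condition δ2. Then for every x̄ ∈ l_Φ^A(X), one has ‖x̄‖_Φ^A = 1 if and only if ρ_Φ^A(x̄) = 1. -/

import Mathlib

open Filter Topology

/-- An Orlicz function: convex, nondecreasing, continuous on `[0,∞)`,
vanishing at `0`, positive on `(0,∞)`, tending to `∞` at `∞`. -/
structure IsOrliczFn (φ : ℝ → ℝ) : Prop where
  convexOn : ConvexOn ℝ (Set.Ici (0 : ℝ)) φ
  monotoneOn : MonotoneOn φ (Set.Ici (0 : ℝ))
  continuousOn : ContinuousOn φ (Set.Ici (0 : ℝ))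
  map_zero : φ 0 = 0
  pos : ∀ t : ℝ, 0 < t → 0 < φ t
  tendsto_atTop : Filter.Tendsto φ Filter.atTop Filter.atTop

/-- A Musielak-Orlicz function: a sequence of Orlicz functions. -/
def IsMusielakOrlicz (Φ : ℕ → ℝ → ℝ) : Prop := ∀ n, IsOrliczFn (Φ n)

/-- Condition δ₂ for a Musielak-Orlicz function. -/
def MOCondDelta2 (Φ : ℕ → ℝ → ℝ) : Prop :=
  ∃ K > (0 : ℝ), ∃ δ > (0 : ℝ), ∃ c : ℕ → ℝ, (∀ n, 0 ≤ c n) ∧ Summable c ∧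
    ∀ n : ℕ, ∀ x : ℝ, 0 ≤ x → Φ n x ≤ δ → Φ n (2 * x) ≤ K * Φ n x + c n

/-- Condition (*) for a Musielak-Orlicz function. -/
def MOCondStar (Φ : ℕ → ℝ → ℝ) : Prop :=
  ∀ ε : ℝ, ε ∈ Set.Ioo (0 : ℝ) 1 → ∃ δ > (0 : ℝ), ∀ n : ℕ, ∀ u : ℝ, 0 ≤ u →
    Φ n u < 1 - ε → Φ n ((1 + δ) * u) ≤ 1

/-- The class 𝒜 of infinite matrices: every column is nonzero. -/
def MatrixClassA (a : ℕ → ℕ → ℝ) : Prop := ∀ k, ∃ n, a n k ≠ 0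

/-- A triangle matrix: nonzero diagonal, zero above the diagonal. -/
def IsTriangle (a : ℕ → ℕ → ℝ) : Prop := (∀ n, a n n ≠ 0) ∧ ∀ n k, n < k → a n k = 0

/-- The `n`-th row sum `∑_k |a_{nk}| ‖x_k‖`. -/
noncomputable def rowSum {X : Type*} [NormedAddCommGroup X]
    (a : ℕ → ℕ → ℝ) (x : ℕ → X) (n : ℕ) : ℝ :=
  ∑' k, |a n k| * ‖x k‖

/-- Membership in the generalized Musielak-Orlicz sequence space `l_Φ^A(X)`:
`x` is a bounded sequence whose row sums are finite and
`∑_n φ_n(rowSum_n / σ) < ∞` for some `σ > 0`. -/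
def MemL {X : Type*} [NormedAddCommGroup X]
    (Φ : ℕ → ℝ → ℝ) (a : ℕ → ℕ → ℝ) (x : ℕ → X) : Prop :=
  (∃ C : ℝ, ∀ k, ‖x k‖ ≤ C) ∧ (∀ n, Summable fun k => |a n k| * ‖x k‖) ∧
    ∃ σ > (0 : ℝ), Summable fun n => Φ n (rowSum a x n / σ)

/-- Membership in `h_Φ^A(X)`: as `MemL` but for every `σ > 0`. -/
def MemH {X : Type*} [NormedAddCommGroup X]
    (Φ : ℕ → ℝ → ℝ) (a : ℕ → ℕ → ℝ) (x : ℕ → X) : Prop :=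
  (∃ C : ℝ, ∀ k, ‖x k‖ ≤ C) ∧ (∀ n, Summable fun k => |a n k| * ‖x k‖) ∧
    ∀ σ > (0 : ℝ), Summable fun n => Φ n (rowSum a x n / σ)

/-- The Luxemburg-type norm `‖x‖_Φ^A`. -/
noncomputable def ANorm {X : Type*} [NormedAddCommGroup X]
    (Φ : ℕ → ℝ → ℝ) (a : ℕ → ℕ → ℝ) (x : ℕ → X) : ℝ :=
  sInf {σ : ℝ | 0 < σ ∧ (Summable fun n => Φ n (rowSum a x n / σ)) ∧
    (∑' n, Φ n (rowSum a x n / σ)) ≤ 1}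

/-- The modular `ρ_Φ^A(x) = ∑_n φ_n(∑_k |a_{nk}| ‖x_k‖)`. -/
noncomputable def rhoA {X : Type*} [NormedAddCommGroup X]
    (Φ : ℕ → ℝ → ℝ) (a : ℕ → ℕ → ℝ) (x : ℕ → X) : ℝ :=
  ∑' n, Φ n (rowSum a x n)

/-- The `m`-th section of a sequence: first `m` coordinates kept, rest zero. -/
def sect {X : Type*} [Zero X] (x : ℕ → X) (m : ℕ) : ℕ → X :=
  fun k => if k < m then x k else 0

/-- An Orlicz function is nonnegative on `[0,∞)`. -/
lemma IsOrliczFn.nonneg {φ : ℝ → ℝ} (h : IsOrliczFn φ) {t : ℝ} (ht : 0 ≤ t) : 0 ≤ φ t := by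
  have := h.monotoneOn (Set.self_mem_Ici) ht ht
  rw [h.map_zero] at this; exact this

/-- Scaling inequality from convexity: `φ(λ t) ≤ λ φ(t)` for `λ ∈ [0,1]`. -/
lemma IsOrliczFn.scale {φ : ℝ → ℝ} (h : IsOrliczFn φ) {l t : ℝ} (hl0 : 0 ≤ l) (hl1 : l ≤ 1)
    (ht : 0 ≤ t) : φ (l * t) ≤ l * φ t := by
  have := h.convexOn.2 (Set.mem_Ici.2 ht) Set.self_mem_Ici hl0
    (show (0:ℝ) ≤ 1 - l by linarith) (show l + (1 - l) = 1 by ring)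
  simpa [h.map_zero, smul_eq_mul] using this

/-- for `A ∈ 𝒜`, `Φ ∈ δ₂` and `x̄ ∈ l_Φ^A(X)`,
`‖x̄‖_Φ^A = 1 ↔ ρ_Φ^A(x̄) = 1`. -/
theorem norm_eq_one_iff_modular_eq_one_on_l
    {X : Type*} [NormedAddCommGroup X] [NormedSpace ℝ X] [CompleteSpace X]
    (Φ : ℕ → ℝ → ℝ) (hΦ : IsMusielakOrlicz Φ) (hδ : MOCondDelta2 Φ)
    (a : ℕ → ℕ → ℝ) (hA : MatrixClassA a) :
    ∀ x : ℕ → X, MemL Φ a x → (ANorm Φ a x = 1 ↔ rhoA Φ a x = 1) := by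
  intro x hx
  set r : ℕ → ℝ := fun n => rowSum a x n with hr
  have hr0 : ∀ n, 0 ≤ r n := fun n =>
    tsum_nonneg fun k => mul_nonneg (abs_nonneg _) (norm_nonneg _)
  have hΦ0 : ∀ n (t : ℝ), 0 ≤ t → 0 ≤ Φ n t := fun n t ht => (hΦ n).nonneg ht
  set S : Set ℝ := {σ : ℝ | 0 < σ ∧ (Summable fun n => Φ n (rowSum a x n / σ)) ∧
    (∑' n, Φ n (rowSum a x n / σ)) ≤ 1} with hS
  have hbdd : BddBelow S := ⟨0, fun σ hσ => hσ.1.le⟩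
  -- continuity helper: for σ_j → 1, σ_j > 0, Φ n (r n / σ_j) → Φ n (r n)
  have hcont : ∀ (σ : ℕ → ℝ), (∀ j, 0 < σ j) → Tendsto σ atTop (𝓝 1) →
      ∀ n, Tendsto (fun j => Φ n (r n / σ j)) atTop (𝓝 (Φ n (r n))) := by
    intro σ hσpos hσ1 n
    have h1 : Tendsto (fun j => r n / σ j) atTop (𝓝 (r n)) := by
      have := (tendsto_const_nhds (x := r n)).div hσ1 one_ne_zero
      rw [div_one] at this; exact this
    have h2 : Tendsto (fun j => r n / σ j) atTop (𝓝[Set.Ici 0] (r n)) :=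
      tendsto_nhdsWithin_of_tendsto_nhds_of_eventually_within _ h1
        (Eventually.of_forall fun j => div_nonneg (hr0 n) (hσpos j).le)
    exact ((hΦ n).continuousOn.continuousWithinAt (Set.mem_Ici.2 (hr0 n))).tendsto.comp h2
  constructor
  · -- norm 1 → modular 1
    intro hnorm
    unfold ANorm at hnorm
    rw [← hS] at hnorm
    have hSne : S.Nonempty := by
      by_contra h
      rw [Set.not_nonempty_iff_eq_empty] at h
      rw [h, Real.sInf_empty] at hnorm
      norm_num at hnorm
    have hge1 : ∀ σ ∈ S, (1 : ℝ) ≤ σ := fun σ hσ => hnorm ▸ csInf_le hbdd hσ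
    -- pick σ j ∈ S with σ j < 1 + 1/(j+1)
    have hpick : ∀ j : ℕ, ∃ σ ∈ S, σ < 1 + 1 / (j + 1 : ℝ) := by
      intro j
      apply exists_lt_of_csInf_lt hSne
      rw [hnorm]
      have : (0:ℝ) < 1 / (j + 1 : ℝ) := by positivity
      linarith
    choose σ hσS hσlt using hpick
    have hσpos : ∀ j, 0 < σ j := fun j => (hσS j).1
    have hσ1 : Tendsto σ atTop (𝓝 1) := by
      have hlow : ∀ j, (1:ℝ) ≤ σ j := fun j => hge1 _ (hσS j)
      have hup : Tendsto (fun j : ℕ => 1 + 1 / (j + 1 : ℝ)) atTop (𝓝 1) := by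
        have := tendsto_one_div_add_atTop_nhds_zero_nat (𝕜 := ℝ)
        have h2 := (tendsto_const_nhds (x := (1:ℝ))).add this
        simpa using h2
      exact tendsto_of_tendsto_of_tendsto_of_le_of_le tendsto_const_nhds hup
        hlow (fun j => (hσlt j).le)
    -- Step B: partial sums of Φ n (r n) are ≤ 1
    have hB : ∀ N : ℕ, ∑ n ∈ Finset.range N, Φ n (r n) ≤ 1 := by
      intro N
      have hlim : Tendsto (fun j => ∑ n ∈ Finset.range N, Φ n (r n / σ j)) atTop
          (𝓝 (∑ n ∈ Finset.range N, Φ n (r n))) :=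
        tendsto_finset_sum _ fun n _ => hcont σ hσpos hσ1 n
      refine le_of_tendsto hlim (Eventually.of_forall fun j => ?_)
      calc ∑ n ∈ Finset.range N, Φ n (r n / σ j)
          ≤ ∑' n, Φ n (r n / σ j) :=
            Summable.sum_le_tsum _ (fun n _ => hΦ0 n _ (div_nonneg (hr0 n) (hσpos j).le)) (hσS j).2.1
        _ ≤ 1 := (hσS j).2.2
    have hsum : Summable fun n => Φ n (r n) :=
      summable_of_sum_range_le (fun n => hΦ0 n _ (hr0 n)) hB
    have hle1 : rhoA Φ a x ≤ 1 := Real.tsum_le_of_sum_range_le (fun n => hΦ0 n _ (hr0 n)) hB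
    -- Step C: suppose modular < 1, derive contradiction using δ₂
    by_contra hne
    have hlt : rhoA Φ a x < 1 := lt_of_le_of_ne hle1 hne
    obtain ⟨K, hK, δ₀, hδ₀, c, hc0, hcsum, hδ2⟩ := hδ
    have htend0 : Tendsto (fun n => Φ n (r n)) atTop (𝓝 0) := hsum.tendsto_atTop_zero
    obtain ⟨N, hN⟩ := (htend0.eventually_lt_const hδ₀).exists_forall_of_atTop
    -- dominating function
    set g : ℕ → ℝ := fun n => if n < N then Φ n (2 * r n) else K * Φ n (r n) + c n with hg
    have hgsum : Summable g := by
      have h1 : Summable fun n => K * Φ n (r n) + c n := (hsum.mul_left K).add hcsum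
      have h2 : Summable fun n => g (n + N) := by
        refine ((summable_nat_add_iff N).2 h1).congr fun n => ?_
        simp [hg, Nat.not_lt.2 (Nat.le_add_left N n)]
      exact (summable_nat_add_iff N).1 h2
    have hgbound : ∀ n, Φ n (2 * r n) ≤ g n := by
      intro n
      by_cases h : n < N
      · simp [hg, h]
      · simp only [hg, if_neg h]
        exact hδ2 n (r n) (hr0 n) (hN n (Nat.le_of_not_lt h)).le
    -- sequence τ j = 1 - 1/(j+2) ↑ 1, τ j ∈ [1/2, 1)
    set τ : ℕ → ℝ := fun j => 1 - 1 / (j + 2 : ℝ) with hτ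
    have hτhalf : ∀ j, (1:ℝ)/2 ≤ τ j := by
      intro j
      have : (1:ℝ) / (j + 2 : ℝ) ≤ 1/2 := by
        rw [div_le_div_iff₀ (by positivity) (by norm_num)]
        have : (0:ℝ) ≤ (j : ℝ) := Nat.cast_nonneg j
        linarith
      simp only [hτ]; linarith
    have hτpos : ∀ j, 0 < τ j := fun j => lt_of_lt_of_le (by norm_num) (hτhalf j)
    have hτlt1 : ∀ j, τ j < 1 := by
      intro j
      have : (0:ℝ) < 1 / (j + 2 : ℝ) := by positivity
      simp only [hτ]; linarith
    have hτ1 : Tendsto τ atTop (𝓝 1) := by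
      have h0 : Tendsto (fun j : ℕ => 1 / (j + 2 : ℝ)) atTop (𝓝 0) := by
        have := (tendsto_one_div_add_atTop_nhds_zero_nat (𝕜 := ℝ)).comp (tendsto_add_atTop_nat 1)
        refine this.congr fun j => ?_
        simp only [Function.comp_apply]
        push_cast; ring_nf
      have := (tendsto_const_nhds (x := (1:ℝ))).sub h0
      simpa [hτ] using this
    -- term bound
    have hbound : ∀ j n, ‖Φ n (r n / τ j)‖ ≤ g n := by
      intro j n
      rw [Real.norm_of_nonneg (hΦ0 n _ (div_nonneg (hr0 n) (hτpos j).le))]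
      refine le_trans ?_ (hgbound n)
      apply (hΦ n).monotoneOn (Set.mem_Ici.2 (div_nonneg (hr0 n) (hτpos j).le))
        (Set.mem_Ici.2 (by linarith [hr0 n] : (0:ℝ) ≤ 2 * r n))
      rw [div_le_iff₀ (hτpos j)]
      calc r n = 2 * r n * (1/2) := by ring
        _ ≤ 2 * r n * τ j := by
            apply mul_le_mul_of_nonneg_left (hτhalf j) (by linarith [hr0 n])
    have hsummτ : ∀ j, Summable fun n => Φ n (r n / τ j) := fun j =>
      hgsum.of_nonneg_of_le (fun n => hΦ0 n _ (div_nonneg (hr0 n) (hτpos j).le))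
        (fun n => (Real.norm_of_nonneg (hΦ0 n _ (div_nonneg (hr0 n) (hτpos j).le))) ▸ hbound j n)
    -- dominated convergence
    have hdct : Tendsto (fun j => ∑' n, Φ n (r n / τ j)) atTop (𝓝 (rhoA Φ a x)) := by
      unfold rhoA
      exact tendsto_tsum_of_dominated_convergence hgsum (fun n => hcont τ hτpos hτ1 n)
        (Eventually.of_forall fun j => fun n => hbound j n)
    obtain ⟨j, hj⟩ := (hdct.eventually_lt_const hlt).exists
    have : τ j ∈ S := ⟨hτpos j, hsummτ j, hj.le⟩
    exact absurd (hge1 _ this) (not_le.2 (hτlt1 j))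
  · -- modular 1 → norm 1
    intro hρ
    have hsum : Summable fun n => Φ n (r n) := by
      by_contra h
      rw [rhoA, tsum_eq_zero_of_not_summable h] at hρ
      norm_num at hρ
    have h1S : (1:ℝ) ∈ S := by
      refine ⟨one_pos, ?_, ?_⟩
      · simpa using hsum
      · simp only [div_one]; exact hρ.le
    have hge : ∀ σ ∈ S, (1:ℝ) ≤ σ := by
      intro σ hσ
      by_contra h
      push_neg at h
      have hσpos := hσ.1
      -- termwise monotonicity
      have hmono : ∀ n, Φ n (r n) ≤ Φ n (r n / σ) := by
        intro n
        apply (hΦ n).monotoneOn (Set.mem_Ici.2 (hr0 n))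
          (Set.mem_Ici.2 (div_nonneg (hr0 n) hσpos.le))
        rw [le_div_iff₀ hσpos]
        nlinarith [hr0 n]
      -- some n₀ with Φ n₀ (r n₀) > 0
      have hex : ∃ n₀, 0 < Φ n₀ (r n₀) := by
        by_contra h'
        push_neg at h'
        have : ∀ n, Φ n (r n) = 0 := fun n => le_antisymm (h' n) (hΦ0 n _ (hr0 n))
        rw [rhoA, tsum_congr this] at hρ
        simp at hρ
      obtain ⟨n₀, hn₀⟩ := hex
      -- strict inequality at n₀
      have hrpos : 0 < r n₀ := by
        rcases lt_or_eq_of_le (hr0 n₀) with h' | h'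
        · exact h'
        · rw [← h', (hΦ n₀).map_zero] at hn₀; norm_num at hn₀
      have hstrict : Φ n₀ (r n₀) < Φ n₀ (r n₀ / σ) := by
        have htdiv : 0 ≤ r n₀ / σ := div_nonneg (hr0 n₀) hσpos.le
        have hsc : Φ n₀ (σ * (r n₀ / σ)) ≤ σ * Φ n₀ (r n₀ / σ) :=
          (hΦ n₀).scale hσpos.le h.le htdiv
        have heq : σ * (r n₀ / σ) = r n₀ := by field_simp
        rw [heq] at hsc
        by_contra h'
        push_neg at h'
        nlinarith
      have hlt : ∑' n, Φ n (r n) < ∑' n, Φ n (r n / σ) :=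
        Summable.tsum_lt_tsum_of_nonneg (fun n => hΦ0 n _ (hr0 n)) hmono hstrict hσ.2.1
      rw [rhoA] at hρ
      rw [hρ] at hlt
      exact absurd hσ.2.2 (not_le.2 hlt)
    unfold ANorm
    rw [← hS]
    exact le_antisymm (csInf_le hbdd h1S) (le_csInf ⟨1, h1S⟩ hge)
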